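/- Let p, q be patterns and let q' be obtained from q by removing from every set of q all labels in lbs(q) \ lbs(p). Then p ∼ q if and only if p ∼ q'. -/

import Mathlib

open Finset
open scoped Classical

namespace PatternST

variable {α : Type*} [DecidableEq α]

/-- `p` is a pattern over ground set `U` with zero element `z`:
a family of subsets of `U ∪ {z}` with exactly one member containing `z`. -/
def IsPattern (z : α) (U : Finset α) (p : Finset (Finset α)) : Prop :=
  (∀ S ∈ p, S ⊆ insert z U) ∧ ∃! S, S ∈ p ∧ z ∈ S

/-- Two sets are linked if one belongs to `p`, the other to `q`, and they intersect. -/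
def linkRel (p q : Finset (Finset α)) (S T : Finset α) : Prop :=
  ((S ∈ p ∧ T ∈ q) ∨ (S ∈ q ∧ T ∈ p)) ∧ (S ∩ T).Nonempty

/-- Reflexive-transitive (and, by symmetry of `linkRel`, symmetric) closure. -/
def conn (p q : Finset (Finset α)) : Finset α → Finset α → Prop :=
  Relation.ReflTransGen (linkRel p q)

/-- The join `p ⋈ q`: unions of the equivalence classes of `conn` on `p ∪ q`. -/
noncomputable def pjoin (p q : Finset (Finset α)) : Finset (Finset α) :=
  (p ∪ q).image fun S => ((p ∪ q).filter fun T => conn p q S T).sup id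

/-- `p` and `q` are consistent if `p ⋈ q` consists of a single set. -/
def consistent (p q : Finset (Finset α)) : Prop := (pjoin p q).card = 1

/-- The labels (elements of `U`, i.e. everything except `z`) occurring in `p`. -/
def lbs (z : α) (p : Finset (Finset α)) : Finset α := (p.sup id).erase z

/-- The labels appearing as singletons in `p`. -/
def sing (z : α) (p : Finset (Finset α)) : Finset α :=
  (lbs z p).filter fun u => ({u} : Finset α) ∈ p

/-- A pattern is complete if every occurring label occurs as a singleton. -/
def Complete (z : α) (p : Finset (Finset α)) : Prop := lbs z p = sing z p

/-! ### Auxiliary lemmas -/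

lemma linkRel_symm {p q : Finset (Finset α)} {S T : Finset α} (h : linkRel p q S T) :
    linkRel p q T S := by
  obtain ⟨h1, h2⟩ := h
  refine ⟨?_, by rwa [Finset.inter_comm]⟩
  rcases h1 with ⟨hS, hT⟩ | ⟨hS, hT⟩
  · exact Or.inr ⟨hT, hS⟩
  · exact Or.inl ⟨hT, hS⟩

lemma conn_symm {p q : Finset (Finset α)} {S T : Finset α} (h : conn p q S T) :
    conn p q T S :=
  (@Relation.ReflTransGen.stdSymm _ _ ⟨fun _ _ h' => linkRel_symm h'⟩).symm _ _ h

lemma conn_of_sup_eq_aux {p q : Finset (Finset α)} {S T : Finset α}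
    (hS : S ∈ p ∪ q) (hT : T ∈ p ∪ q)
    (hlink : ∃ A, linkRel p q T A)
    (h : ((p ∪ q).filter fun B => conn p q S B).sup id
       = ((p ∪ q).filter fun B => conn p q T B).sup id) :
    conn p q S T := by
  obtain ⟨A, ⟨hmem, x, hx⟩⟩ := hlink
  have hxT : x ∈ T := (Finset.mem_inter.1 hx).1
  have hxA : x ∈ A := (Finset.mem_inter.1 hx).2
  have hTsup : x ∈ ((p ∪ q).filter fun B => conn p q T B).sup id := by
    have hmemT : T ∈ (p ∪ q).filter fun B => conn p q T B :=
      Finset.mem_filter.2 ⟨hT, Relation.ReflTransGen.refl⟩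
    exact Finset.le_sup (f := id) hmemT hxT
  rw [← h] at hTsup
  obtain ⟨B, hB, hxB⟩ := Finset.mem_sup.1 hTsup
  obtain ⟨hBmem, hSB⟩ := Finset.mem_filter.1 hB
  rcases hmem with ⟨hTp, hAq⟩ | ⟨hTq, hAp⟩
  · rcases Finset.mem_union.1 hBmem with hBp | hBq
    · exact (hSB.tail ⟨Or.inl ⟨hBp, hAq⟩, ⟨x, Finset.mem_inter.2 ⟨hxB, hxA⟩⟩⟩).tail
        ⟨Or.inr ⟨hAq, hTp⟩, ⟨x, Finset.mem_inter.2 ⟨hxA, hxT⟩⟩⟩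
    · exact hSB.tail ⟨Or.inr ⟨hBq, hTp⟩, ⟨x, Finset.mem_inter.2 ⟨hxB, hxT⟩⟩⟩
  · rcases Finset.mem_union.1 hBmem with hBp | hBq
    · exact hSB.tail ⟨Or.inl ⟨hBp, hTq⟩, ⟨x, Finset.mem_inter.2 ⟨hxB, hxT⟩⟩⟩
    · exact (hSB.tail ⟨Or.inr ⟨hBq, hAp⟩, ⟨x, Finset.mem_inter.2 ⟨hxB, hxA⟩⟩⟩).tail
        ⟨Or.inl ⟨hAp, hTq⟩, ⟨x, Finset.mem_inter.2 ⟨hxA, hxT⟩⟩⟩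

lemma filter_conn_of_no_link {p q : Finset (Finset α)} {T : Finset α}
    (hT : T ∈ p ∪ q) (hTl : ¬ ∃ A, linkRel p q T A) :
    ((p ∪ q).filter fun B => conn p q T B) = {T} := by
  ext A
  simp only [Finset.mem_filter, Finset.mem_singleton]
  constructor
  · rintro ⟨hA, hconn⟩
    rcases hconn.cases_head with heq | ⟨c, hc, -⟩
    · exact heq.symm
    · exact absurd ⟨c, hc⟩ hTl
  · rintro rfl
    exact ⟨hT, Relation.ReflTransGen.refl⟩

lemma conn_of_sup_eq {p q : Finset (Finset α)} {S T : Finset α}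
    (hS : S ∈ p ∪ q) (hT : T ∈ p ∪ q)
    (h : ((p ∪ q).filter fun B => conn p q S B).sup id
       = ((p ∪ q).filter fun B => conn p q T B).sup id) :
    conn p q S T := by
  by_cases hTl : ∃ A, linkRel p q T A
  · exact conn_of_sup_eq_aux hS hT hTl h
  · by_cases hSl : ∃ A, linkRel p q S A
    · exact conn_symm (conn_of_sup_eq_aux hT hS hSl h.symm)
    · rw [filter_conn_of_no_link hS hSl, filter_conn_of_no_link hT hTl,
        Finset.sup_singleton, Finset.sup_singleton] at h
      rw [show S = T from h]
      exact Relation.ReflTransGen.refl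

lemma consistent_iff {p q : Finset (Finset α)} :
    consistent p q ↔ (p ∪ q).Nonempty ∧ ∀ S ∈ p ∪ q, ∀ T ∈ p ∪ q, conn p q S T := by
  constructor
  · intro h
    obtain ⟨a, ha⟩ := Finset.card_eq_one.1 h
    have hne : (p ∪ q).Nonempty := by
      rcases Finset.eq_empty_or_nonempty (p ∪ q) with he | hne
      · exfalso
        rw [pjoin, he, Finset.image_empty] at ha
        exact (Finset.singleton_ne_empty a) ha.symm
      · exact hne
    refine ⟨hne, fun S hS T hT => ?_⟩
    have h1 : ((p ∪ q).filter fun B => conn p q S B).sup id ∈ pjoin p q := by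
      rw [pjoin]; exact Finset.mem_image_of_mem _ hS
    have h2 : ((p ∪ q).filter fun B => conn p q T B).sup id ∈ pjoin p q := by
      rw [pjoin]; exact Finset.mem_image_of_mem _ hT
    rw [ha, Finset.mem_singleton] at h1 h2
    exact conn_of_sup_eq hS hT (h1.trans h2.symm)
  · rintro ⟨hne, hconn⟩
    have hpj : pjoin p q = {(p ∪ q).sup id} := by
      rw [pjoin]
      rw [Finset.image_congr (g := fun _ => (p ∪ q).sup id)
        (fun S hS => by
          rw [Finset.filter_true_of_mem (fun T hT => hconn S hS T hT)])]
      exact Finset.image_const hne _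
    rw [consistent, hpj, Finset.card_singleton]

lemma mem_p_not_D {z : α} {p q : Finset (Finset α)} {A : Finset α} {x : α}
    (hA : A ∈ p) (hx : x ∈ A) : x ∉ lbs z q \ lbs z p := by
  intro hxD
  obtain ⟨hx1, hx2⟩ := Finset.mem_sdiff.1 hxD
  exact hx2 (Finset.mem_erase.2 ⟨(Finset.mem_erase.1 hx1).1,
    Finset.mem_sup.2 ⟨A, hA, hx⟩⟩)

lemma p_sdiff {z : α} {p q : Finset (Finset α)} {A : Finset α} (hA : A ∈ p) :
    A \ (lbs z q \ lbs z p) = A :=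
  Finset.sdiff_eq_self_iff_disjoint.2
    (Finset.disjoint_left.2 fun _ hx hD => mem_p_not_D hA hx hD)

lemma getA {z : α} {U : Finset α} {p q : Finset (Finset α)} {S : Finset α} {x : α}
    (hp : IsPattern z U p) (hS : S ∈ p ∪ q) (hx : x ∈ S)
    (hxD : x ∉ lbs z q \ lbs z p) : ∃ A ∈ p, x ∈ A := by
  rcases Finset.mem_union.1 hS with hSp | hSq
  · exact ⟨S, hSp, hx⟩
  · by_cases hxz : x = z
    · obtain ⟨A0, ⟨hA0, hz⟩, -⟩ := hp.2
      exact ⟨A0, hA0, hxz ▸ hz⟩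
    · have hlq : x ∈ lbs z q :=
        Finset.mem_erase.2 ⟨hxz, Finset.mem_sup.2 ⟨S, hSq, hx⟩⟩
      have hlp : x ∈ lbs z p := by
        by_contra hc
        exact hxD (Finset.mem_sdiff.2 ⟨hlq, hc⟩)
      obtain ⟨A, hA, hxA⟩ := Finset.mem_sup.1 (Finset.mem_erase.1 hlp).2
      exact ⟨A, hA, hxA⟩

lemma conn_of_sdiff_eq {z : α} {U : Finset α} {p q : Finset (Finset α)} {S T : Finset α}
    (hp : IsPattern z U p) (hS : S ∈ p ∪ q) (hT : T ∈ p ∪ q)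
    (h : S \ (lbs z q \ lbs z p) = T \ (lbs z q \ lbs z p))
    (hne : (S \ (lbs z q \ lbs z p)).Nonempty) : conn p q S T := by
  obtain ⟨x, hx⟩ := hne
  have hx' : x ∈ T \ (lbs z q \ lbs z p) := h ▸ hx
  obtain ⟨hxS, hxD⟩ := Finset.mem_sdiff.1 hx
  have hxT : x ∈ T := (Finset.mem_sdiff.1 hx').1
  rcases Finset.mem_union.1 hS with hSp | hSq
  · rcases Finset.mem_union.1 hT with hTp | hTq
    · have heq : S = T := by rw [← p_sdiff (z := z) (q := q) hSp, h, p_sdiff hTp]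
      rw [heq]
      exact Relation.ReflTransGen.refl
    · exact Relation.ReflTransGen.single
        ⟨Or.inl ⟨hSp, hTq⟩, ⟨x, Finset.mem_inter.2 ⟨hxS, hxT⟩⟩⟩
  · rcases Finset.mem_union.1 hT with hTp | hTq
    · exact Relation.ReflTransGen.single
        ⟨Or.inr ⟨hSq, hTp⟩, ⟨x, Finset.mem_inter.2 ⟨hxS, hxT⟩⟩⟩
    · obtain ⟨A, hAp, hxA⟩ := getA hp hS hxS hxD
      exact (Relation.ReflTransGen.single
        ⟨Or.inr ⟨hSq, hAp⟩, ⟨x, Finset.mem_inter.2 ⟨hxS, hxA⟩⟩⟩).tail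
        ⟨Or.inl ⟨hAp, hTq⟩, ⟨x, Finset.mem_inter.2 ⟨hxA, hxT⟩⟩⟩

lemma conn_step {z : α} {U : Finset α} {p q : Finset (Finset α)} {S S' : Finset α}
    (hp : IsPattern z U p) (hS : S ∈ p ∪ q) (hS' : S' ∈ p ∪ q)
    (hl : linkRel p (q.image fun B => B \ (lbs z q \ lbs z p))
      (S \ (lbs z q \ lbs z p)) (S' \ (lbs z q \ lbs z p))) : conn p q S S' := by
  obtain ⟨hmem, x, hx⟩ := hl
  obtain ⟨hx1, hx2⟩ := Finset.mem_inter.1 hx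
  obtain ⟨hxS, hxD⟩ := Finset.mem_sdiff.1 hx1
  have hxS' : x ∈ S' := (Finset.mem_sdiff.1 hx2).1
  rcases Finset.mem_union.1 hS with hSp | hSq
  · rcases Finset.mem_union.1 hS' with hS'p | hS'q
    · -- both in p : go through a preimage in q of whichever side is in q'
      rcases hmem with ⟨-, hX'q'⟩ | ⟨hXq', -⟩
      · obtain ⟨T, hTq, hfT⟩ := Finset.mem_image.1 hX'q'
        have hxT : x ∈ T := (Finset.mem_sdiff.1 (hfT ▸ hx2)).1
        exact (Relation.ReflTransGen.single
          ⟨Or.inl ⟨hSp, hTq⟩, ⟨x, Finset.mem_inter.2 ⟨hxS, hxT⟩⟩⟩).tail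
          ⟨Or.inr ⟨hTq, hS'p⟩, ⟨x, Finset.mem_inter.2 ⟨hxT, hxS'⟩⟩⟩
      · obtain ⟨T, hTq, hfT⟩ := Finset.mem_image.1 hXq'
        have hxT : x ∈ T := (Finset.mem_sdiff.1 (hfT ▸ hx1)).1
        exact (Relation.ReflTransGen.single
          ⟨Or.inl ⟨hSp, hTq⟩, ⟨x, Finset.mem_inter.2 ⟨hxS, hxT⟩⟩⟩).tail
          ⟨Or.inr ⟨hTq, hS'p⟩, ⟨x, Finset.mem_inter.2 ⟨hxT, hxS'⟩⟩⟩
    · exact Relation.ReflTransGen.single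
        ⟨Or.inl ⟨hSp, hS'q⟩, ⟨x, Finset.mem_inter.2 ⟨hxS, hxS'⟩⟩⟩
  · rcases Finset.mem_union.1 hS' with hS'p | hS'q
    · exact Relation.ReflTransGen.single
        ⟨Or.inr ⟨hSq, hS'p⟩, ⟨x, Finset.mem_inter.2 ⟨hxS, hxS'⟩⟩⟩
    · obtain ⟨A, hAp, hxA⟩ := getA hp hS hxS hxD
      exact (Relation.ReflTransGen.single
        ⟨Or.inr ⟨hSq, hAp⟩, ⟨x, Finset.mem_inter.2 ⟨hxS, hxA⟩⟩⟩).tail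
        ⟨Or.inl ⟨hAp, hS'q⟩, ⟨x, Finset.mem_inter.2 ⟨hxA, hxS'⟩⟩⟩

lemma conn_back {z : α} {U : Finset α} {p q : Finset (Finset α)} {X Y : Finset α}
    (hp : IsPattern z U p)
    (h : Relation.ReflTransGen (linkRel p (q.image fun B => B \ (lbs z q \ lbs z p))) X Y) :
    X.Nonempty → ∀ S T, S ∈ p ∪ q → T ∈ p ∪ q →
      S \ (lbs z q \ lbs z p) = X → T \ (lbs z q \ lbs z p) = Y → conn p q S T := by
  induction h using Relation.ReflTransGen.head_induction_on with
  | refl =>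
    intro hne S T hS hT hSX hTY
    exact conn_of_sdiff_eq hp hS hT (hSX.trans hTY.symm) (hSX ▸ hne)
  | head h' hcY ih =>
    rename_i a c
    intro hne S T hS hT hSX hTY
    obtain ⟨hmem, x, hx⟩ := h'
    have hxc : x ∈ c := (Finset.mem_inter.1 hx).2
    -- find a preimage S' of c
    have hpre : ∃ S', S' ∈ p ∪ q ∧ S' \ (lbs z q \ lbs z p) = c := by
      rcases hmem with ⟨-, hcq'⟩ | ⟨-, hcp⟩
      · obtain ⟨S', hS'q, hfS'⟩ := Finset.mem_image.1 hcq'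
        exact ⟨S', Finset.mem_union_right _ hS'q, hfS'⟩
      · exact ⟨_, Finset.mem_union_left _ hcp, p_sdiff hcp⟩
    obtain ⟨S', hS'mem, hfS'⟩ := hpre
    have hstep : conn p q S S' :=
      conn_step hp hS hS'mem (by rw [hSX, hfS']; exact ⟨hmem, x, hx⟩)
    have hrest : conn p q S' T :=
      ih ⟨x, hxc⟩ S' T hS'mem hT hfS' hTY
    exact hstep.trans hrest

lemma link_lift {z : α} {p q : Finset (Finset α)} (a b : Finset α)
    (h : linkRel p q a b) :
    linkRel p (q.image fun B => B \ (lbs z q \ lbs z p))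
      (a \ (lbs z q \ lbs z p)) (b \ (lbs z q \ lbs z p)) := by
  obtain ⟨hmem, x, hx⟩ := h
  obtain ⟨hxa, hxb⟩ := Finset.mem_inter.1 hx
  rcases hmem with ⟨hap, hbq⟩ | ⟨haq, hbp⟩
  · have hxD := mem_p_not_D (z := z) (q := q) hap hxa
    exact ⟨Or.inl ⟨(p_sdiff hap).symm ▸ hap, Finset.mem_image_of_mem _ hbq⟩,
      ⟨x, Finset.mem_inter.2 ⟨Finset.mem_sdiff.2 ⟨hxa, hxD⟩, Finset.mem_sdiff.2 ⟨hxb, hxD⟩⟩⟩⟩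
  · have hxD := mem_p_not_D (z := z) (q := q) hbp hxb
    exact ⟨Or.inr ⟨Finset.mem_image_of_mem _ haq, (p_sdiff hbp).symm ▸ hbp⟩,
      ⟨x, Finset.mem_inter.2 ⟨Finset.mem_sdiff.2 ⟨hxa, hxD⟩, Finset.mem_sdiff.2 ⟨hxb, hxD⟩⟩⟩⟩

/-- Removing from `q` all labels not occurring in `p` preserves consistency with `p`. -/
theorem remove_extra_labels (z : α) (U : Finset α) (p q : Finset (Finset α))
    (hp : IsPattern z U p) (hq : IsPattern z U q) :
    consistent p q ↔ consistent p (q.image fun S => S \ (lbs z q \ lbs z p)) := by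
  obtain ⟨A0, ⟨hA0p, hzA0⟩, -⟩ := hp.2
  rw [consistent_iff, consistent_iff]
  constructor
  · rintro ⟨-, hconn⟩
    refine ⟨⟨A0, Finset.mem_union_left _ hA0p⟩, fun X hX Y hY => ?_⟩
    obtain ⟨S, hS, hfS⟩ : ∃ S, S ∈ p ∪ q ∧ S \ (lbs z q \ lbs z p) = X := by
      rcases Finset.mem_union.1 hX with hXp | hXq'
      · exact ⟨X, Finset.mem_union_left _ hXp, p_sdiff hXp⟩
      · obtain ⟨S, hSq, hfS⟩ := Finset.mem_image.1 hXq'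
        exact ⟨S, Finset.mem_union_right _ hSq, hfS⟩
    obtain ⟨T, hT, hfT⟩ : ∃ T, T ∈ p ∪ q ∧ T \ (lbs z q \ lbs z p) = Y := by
      rcases Finset.mem_union.1 hY with hYp | hYq'
      · exact ⟨Y, Finset.mem_union_left _ hYp, p_sdiff hYp⟩
      · obtain ⟨T, hTq, hfT⟩ := Finset.mem_image.1 hYq'
        exact ⟨T, Finset.mem_union_right _ hTq, hfT⟩
    have hlift : Relation.ReflTransGen
        (linkRel p (q.image fun B => B \ (lbs z q \ lbs z p)))
        (S \ (lbs z q \ lbs z p)) (T \ (lbs z q \ lbs z p)) :=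
      Relation.ReflTransGen.lift (fun B => B \ (lbs z q \ lbs z p))
        (fun a b hab => link_lift a b hab) _ _ (hconn S hS T hT)
    rwa [hfS, hfT] at hlift
  · rintro ⟨-, hconn⟩
    refine ⟨⟨A0, Finset.mem_union_left _ hA0p⟩, fun S hS T hT => ?_⟩
    have hfS : S \ (lbs z q \ lbs z p) ∈ p ∪ q.image fun B => B \ (lbs z q \ lbs z p) := by
      rcases Finset.mem_union.1 hS with hSp | hSq
      · exact Finset.mem_union_left _ ((p_sdiff hSp).symm ▸ hSp)
      · exact Finset.mem_union_right _ (Finset.mem_image_of_mem _ hSq)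
    have hfT : T \ (lbs z q \ lbs z p) ∈ p ∪ q.image fun B => B \ (lbs z q \ lbs z p) := by
      rcases Finset.mem_union.1 hT with hTp | hTq
      · exact Finset.mem_union_left _ ((p_sdiff hTp).symm ▸ hTp)
      · exact Finset.mem_union_right _ (Finset.mem_image_of_mem _ hTq)
    have h := hconn _ hfS _ hfT
    have hne : (S \ (lbs z q \ lbs z p)).Nonempty := by
      by_contra hemp
      rw [Finset.not_nonempty_iff_eq_empty] at hemp
      have h2 := hconn _ hfS A0 (Finset.mem_union_left _ hA0p)
      rw [hemp] at h2
      rcases h2.cases_head with heq | ⟨c, hc, -⟩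
      · exact (Finset.notMem_empty z) (heq ▸ hzA0)
      · obtain ⟨-, y, hy⟩ := hc
        simp at hy
    exact conn_back hp h hne S T hS hT rfl rfl

end PatternST
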